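/- The cardinality of ~FY(B_n) equals Ã_n(1) = 1 + Σ_{k=1}^n C(n,k)·k!. -/

import Mathlib

open Finset

/-- the previous set `F (i-1)` in a chain, with `F (-1) = ∅` -/
def prevSet {n k : ℕ} (F : Fin k → Finset (Fin n)) (i : Fin k) : Finset (Fin n) :=
  if h : 0 < (i : ℕ) then F ⟨(i : ℕ) - 1, Nat.lt_of_le_of_lt (Nat.sub_le _ _) i.isLt⟩ else ∅

/-- Feichtner--Yuzvinsky basis data for the Chow ring of the Boolean matroid:
a strictly increasing chain `∅ = F₀ ⊊ F₁ ⊊ ⋯ ⊊ F_k ⊆ [n]` together with exponents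
`1 ≤ aᵢ ≤ |Fᵢ| - |Fᵢ₋₁| - 1`. -/
def IsFY {n : ℕ} (p : Σ k : ℕ, (Fin k → Finset (Fin n)) × (Fin k → ℕ)) : Prop :=
  StrictMono p.2.1 ∧
  ∀ i : Fin p.1, 1 ≤ p.2.2 i ∧ p.2.2 i + (prevSet p.2.1 i).card < (p.2.1 i).card

/-- total degree `Σ aᵢ` of the monomial data -/
def FYdeg {n : ℕ} (p : Σ k : ℕ, (Fin k → Finset (Fin n)) × (Fin k → ℕ)) : ℕ :=
  ∑ i, p.2.2 i

/-- the set `FY(B_n)` -/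
def FYBn (n : ℕ) := {p : Σ k : ℕ, (Fin k → Finset (Fin n)) × (Fin k → ℕ) // IsFY p}

/-- the action of a permutation of `[n]` on monomial data, replacing each `Fᵢ` by its image -/
def permFY {n : ℕ} (σ : Equiv.Perm (Fin n))
    (p : Σ k : ℕ, (Fin k → Finset (Fin n)) × (Fin k → ℕ)) :
    Σ k : ℕ, (Fin k → Finset (Fin n)) × (Fin k → ℕ) :=
  ⟨p.1, fun i => (p.2.1 i).image σ, p.2.2⟩

/-- Feichtner--Yuzvinsky-type basis data for the augmented Chow ring of `B_n`:
a strictly increasing chain `∅ = F₀ ⊊ F₁ ⊊ ⋯ ⊊ F_k ⊆ [n]` together with exponents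
`1 ≤ a₁ ≤ |F₁|` and `1 ≤ aᵢ ≤ |Fᵢ| - |Fᵢ₋₁| - 1` for `i ≥ 2`
(the case `k = 0` is the empty monomial). -/
def IsAugFY {n : ℕ} (p : Σ k : ℕ, (Fin k → Finset (Fin n)) × (Fin k → ℕ)) : Prop :=
  StrictMono p.2.1 ∧
  ∀ i : Fin p.1, 1 ≤ p.2.2 i ∧
    (if (i : ℕ) = 0 then p.2.2 i ≤ (p.2.1 i).card
     else p.2.2 i + (prevSet p.2.1 i).card < (p.2.1 i).card)

/-- the set `~FY(B_n)` -/
def AugFYBn (n : ℕ) := {p : Σ k : ℕ, (Fin k → Finset (Fin n)) × (Fin k → ℕ) // IsAugFY p}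

def cond2 {n : ℕ} (x y : Finset (Fin n) × ℕ) : Prop :=
  x.1 ⊂ y.1 ∧ y.2 + x.1.card < y.1.card

def OkRev {n : ℕ} (l : List (Finset (Fin n) × ℕ)) : Prop :=
  (∀ x ∈ l, 1 ≤ x.2) ∧ List.Chain' (flip (cond2 (n := n))) l ∧
    ∀ x ∈ l.getLast?, x.2 ≤ x.1.card

lemma okRev_nil {n : ℕ} : OkRev ([] : List (Finset (Fin n) × ℕ)) := by
  simp [OkRev, List.Chain']

lemma okRev_singleton {n : ℕ} {x : Finset (Fin n) × ℕ} :
    OkRev [x] ↔ 1 ≤ x.2 ∧ x.2 ≤ x.1.card := by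
  simp [OkRev, List.Chain']

lemma okRev_cons_cons {n : ℕ} {x y : Finset (Fin n) × ℕ} {t : List (Finset (Fin n) × ℕ)} :
    OkRev (x :: y :: t) ↔
      (y.1 ⊂ x.1 ∧ 1 ≤ x.2 ∧ x.2 + y.1.card < x.1.card) ∧ OkRev (y :: t) := by
  simp only [OkRev, List.Chain', List.isChain_cons_cons, List.getLast?_cons_cons, List.mem_cons, flip, cond2]
  constructor
  · rintro ⟨h1, ⟨hc, hch⟩, h3⟩
    exact ⟨⟨hc.1, h1 _ (Or.inl rfl), hc.2⟩, fun z hz => h1 z (Or.inr hz), hch, h3⟩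
  · rintro ⟨⟨hs, hx, hlt⟩, h1, hch, h3⟩
    exact ⟨fun z hz => hz.elim (fun e => e ▸ hx) (h1 z), ⟨⟨hs, hlt⟩, hch⟩, h3⟩

/-- the translation lemma -/
lemma isAugFY_iff {n : ℕ} (p : Σ k : ℕ, (Fin k → Finset (Fin n)) × (Fin k → ℕ)) :
    IsAugFY p ↔ OkRev ((List.ofFn (fun i => (p.2.1 i, p.2.2 i))).reverse) := by
  obtain ⟨k, F, a⟩ := p
  unfold IsAugFY OkRev
  rw [List.Chain', List.isChain_reverse, List.getLast?_reverse]
  simp only [List.mem_reverse, List.mem_ofFn]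
  match k with
  | 0 =>
      simp only [List.ofFn_zero, List.head?_nil]
      constructor
      · rintro ⟨h1, h2⟩
        refine ⟨?_, by simp, by simp⟩
        rintro x ⟨i, rfl⟩; exact (h2 i).1
      · rintro ⟨h1, h2, h3⟩
        exact ⟨fun i j h => i.elim0, fun i => i.elim0⟩
  | (k + 1) =>
      rw [Fin.strictMono_iff_lt_succ]
      have hh : (List.ofFn fun i : Fin (k+1) => (F i, a i)).head? = some (F 0, a 0) := by
        rw [List.ofFn_succ]; rfl
      rw [hh]
      constructor
      · rintro ⟨hmono, hcond⟩
        refine ⟨?_, ?_, ?_⟩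
        · rintro x ⟨i, rfl⟩; exact (hcond i).1
        · rw [List.isChain_ofFn]
          intro i hi
          refine ⟨?_, ?_⟩
          · exact Finset.lt_iff_ssubset.mp (hmono ⟨i, by omega⟩)
          · have := (hcond ⟨i+1, hi⟩).2
            rw [if_neg (by simp)] at this
            simp only [prevSet, Nat.add_sub_cancel] at this
            rw [dif_pos (by simp)] at this
            exact this
        · simp only [Option.mem_some_iff]
          rintro x rfl
          have := (hcond 0).2
          simpa using this
      · rintro ⟨h1, hch, h3⟩
        rw [List.isChain_ofFn] at hch
        constructor
        · intro i
          exact Finset.lt_iff_ssubset.mpr (hch i.val (by omega)).1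
        · intro i
          refine ⟨h1 _ ⟨i, rfl⟩, ?_⟩
          rcases i with ⟨iv, hiv⟩
          match iv with
          | 0 =>
              rw [if_pos rfl]
              exact h3 _ rfl
          | (j + 1) =>
              rw [if_neg (by simp)]
              have := (hch j hiv).2
              simp only [prevSet, Nat.add_sub_cancel]
              rw [dif_pos (by simp)]
              exact this

-- chunk 3: base equiv and finiteness
def toListEquiv {n : ℕ} : (Σ k : ℕ, (Fin k → Finset (Fin n)) × (Fin k → ℕ)) ≃
    List (Finset (Fin n) × ℕ) :=
  ((Equiv.sigmaCongrRight fun _ => (Equiv.arrowProdEquivProdArrow _ _ _).symm).trans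
    List.equivSigmaTuple.symm).trans (Function.Involutive.toPerm _ List.reverse_reverse)

lemma toListEquiv_apply {n : ℕ} (p : Σ k : ℕ, (Fin k → Finset (Fin n)) × (Fin k → ℕ)) :
    toListEquiv p = (List.ofFn fun i => (p.2.1 i, p.2.2 i)).reverse := rfl

def OkL (n : ℕ) := {l : List (Finset (Fin n) × ℕ) // OkRev l}

def augEquiv (n : ℕ) : AugFYBn n ≃ OkL n :=
  Equiv.subtypeEquiv toListEquiv fun p => isAugFY_iff p

lemma okRev_tail {n : ℕ} {x : Finset (Fin n) × ℕ} {t : List (Finset (Fin n) × ℕ)}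
    (h : OkRev (x :: t)) : OkRev t := by
  match t with
  | [] => exact okRev_nil
  | y :: t' => exact (okRev_cons_cons.mp h).2

lemma okRev_bound {n : ℕ} {l : List (Finset (Fin n) × ℕ)} (h : OkRev l) :
    ∀ x ∈ l, x.2 ≤ n := by
  induction l with
  | nil => simp
  | cons x t ih =>
    intro z hz
    rw [List.mem_cons] at hz
    rcases hz with hz | hz
    · subst hz
      match t with
      | [] =>
        have := okRev_singleton.mp h
        calc z.2 ≤ z.1.card := this.2
        _ ≤ Fintype.card (Fin n) := Finset.card_le_univ _
        _ = n := Fintype.card_fin n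
      | y :: t' =>
        have := (okRev_cons_cons.mp h).1
        have h2 : z.2 + y.1.card < z.1.card := this.2.2
        have h3 : z.1.card ≤ n := by
          calc z.1.card ≤ Fintype.card (Fin n) := Finset.card_le_univ _
          _ = n := Fintype.card_fin n
        omega
    · exact ih (okRev_tail h) z hz
  
lemma okRev_length {n : ℕ} {l : List (Finset (Fin n) × ℕ)} (h : OkRev l) :
    l.length ≤ n + 1 := by
  have hch : List.Chain' (· > ·) (l.map fun x => x.1.card) := by
    rw [List.Chain', List.isChain_map]
    exact h.2.1.imp fun {a b} hab => Finset.card_lt_card hab.1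
  have hpw : (l.map fun x => x.1.card).Pairwise (· > ·) := List.isChain_iff_pairwise.mp hch
  have hnd : (l.map fun x => x.1.card).Nodup := hpw.imp fun {a b} hab => Nat.ne_of_gt hab
  have hsub : (l.map fun x => x.1.card).toFinset ⊆ Finset.range (n + 1) := by
    intro c hc
    rw [List.mem_toFinset, List.mem_map] at hc
    obtain ⟨x, _, rfl⟩ := hc
    rw [Finset.mem_range]
    have : x.1.card ≤ n := by
      calc x.1.card ≤ Fintype.card (Fin n) := Finset.card_le_univ _
      _ = n := Fintype.card_fin n
    omega
  have := Finset.card_le_card hsub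
  rw [List.toFinset_card_of_nodup hnd, Finset.card_range, List.length_map] at this
  exact this

instance okLFinite (n : ℕ) : Finite (OkL n) := by
  classical
  let enc : OkL n → (Fin (n + 2) → Option (Finset (Fin n) × Fin (n + 1))) :=
    fun q i => (q.1[(i : ℕ)]?).map fun x => (x.1, ⟨min x.2 n, by omega⟩)
  apply Finite.of_injective enc
  intro q1 q2 hq
  have hlen1 := okRev_length q1.2
  have hlen2 := okRev_length q2.2
  apply Subtype.ext
  apply List.ext_getElem?
  intro i
  by_cases hi : i < n + 2
  · have := congrFun hq ⟨i, hi⟩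
    simp only [enc] at this
    have rec1 : ∀ (l : List (Finset (Fin n) × ℕ)), OkRev l →
        (l[i]?.map (fun x : Finset (Fin n) × ℕ =>
          ((x.1, (⟨min x.2 n, by omega⟩ : Fin (n+1))) : Finset (Fin n) × Fin (n+1)))).map
          (fun y : Finset (Fin n) × Fin (n+1) => ((y.1, (y.2 : ℕ)) : Finset (Fin n) × ℕ))
          = l[i]? := by
      intro l hl
      match hll : l[i]? with
      | none => simp
      | some x =>
        have hx : x ∈ l := List.mem_of_getElem? hll
        have := okRev_bound hl x hx
        simp [min_eq_left this]
    calc q1.1[i]? = _ := (rec1 q1.1 q1.2).symm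
    _ = _ := by rw [this]
    _ = q2.1[i]? := rec1 q2.1 q2.2
  · rw [List.getElem?_eq_none (by omega), List.getElem?_eq_none (by omega)]

-- chunk 4: DataP and partition
def DataP (n : ℕ) (M : Finset (Fin n)) :=
  {x : (Finset (Fin n) × ℕ) × List (Finset (Fin n) × ℕ) // OkRev (x.1 :: x.2) ∧ x.1.1 = M}

instance dataPFinite (n : ℕ) (M : Finset (Fin n)) : Finite (DataP n M) :=
  Finite.of_injective (β := OkL n) (fun q : DataP n M => (⟨q.1.1 :: q.1.2, q.2.1⟩ : OkL n))
    (by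
      intro q1 q2 h
      apply Subtype.ext
      have := congrArg Subtype.val h
      simp only [List.cons.injEq] at this
      exact Prod.ext this.1 this.2)

def partEquiv (n : ℕ) : OkL n ≃ Option (Σ M : Finset (Fin n), DataP n M) where
  toFun q :=
    match q with
    | ⟨[], _⟩ => none
    | ⟨x :: t, h⟩ => some ⟨x.1, ⟨(x, t), h, rfl⟩⟩
  invFun o :=
    match o with
    | none => ⟨[], okRev_nil⟩
    | some ⟨_, ⟨(x, t), h, _⟩⟩ => ⟨x :: t, h⟩
  left_inv q := by
    rcases q with ⟨l, h⟩
    match l with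
    | [] => rfl
    | x :: t => rfl
  right_inv o := by
    match o with
    | none => rfl
    | some ⟨M, ⟨(x, t), h, hM⟩⟩ =>
      dsimp only
      subst hM
      rfl

-- chunk 5: peel equiv
def peel (n : ℕ) (M : Finset (Fin n)) :
    DataP n M ≃ {a : ℕ // 1 ≤ a ∧ a ≤ M.card} ⊕
      Σ P : Finset (Fin n), Fin (M.card - P.card - 1) × {q : DataP n P // P ⊂ M} where
  toFun q :=
    match q with
    | ⟨((S, a), []), hok, hS⟩ =>
        Sum.inl ⟨a, by
          have := okRev_singleton.mp hok
          subst hS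
          exact this⟩
    | ⟨((S, a), y :: t), hok, hS⟩ =>
        Sum.inr ⟨y.1, ⟨⟨a - 1, by
            obtain ⟨_, h1, h2⟩ := (okRev_cons_cons.mp hok).1
            have h1' : 1 ≤ a := h1
            have h2' : a + y.1.card < S.card := h2
            have hS2 : S = M := hS
            subst hS2
            omega⟩,
          ⟨⟨(y, t), (okRev_cons_cons.mp hok).2, rfl⟩, by
            have := (okRev_cons_cons.mp hok).1
            subst hS
            exact this.1⟩⟩⟩
  invFun o :=
    match o with
    | Sum.inl ⟨a, ha⟩ => ⟨((M, a), []), okRev_singleton.mpr ha, rfl⟩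
    | Sum.inr ⟨P, ⟨c, ⟨⟨((S', b), t'), hok', hS'⟩, hPM⟩⟩⟩ =>
        ⟨((M, (c : ℕ) + 1), (S', b) :: t'),
          okRev_cons_cons.mpr ⟨⟨by
            have hS2 : S' = P := hS'
            subst hS2
            exact hPM,
            by dsimp only; omega, by
            show (c : ℕ) + 1 + S'.card < M.card
            have hS2 : S' = P := hS'
            subst hS2
            have hc := c.isLt
            omega⟩, hok'⟩, rfl⟩
  left_inv q := by
    rcases q with ⟨⟨⟨S, a⟩, t⟩, hok, hS⟩
    dsimp only at hS
    subst hS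
    match t with
    | [] => rfl
    | y :: t' =>
        apply Subtype.ext
        dsimp only
        have h1 : 1 ≤ a := (okRev_cons_cons.mp hok).1.2.1
        congr 2
        omega
  right_inv o := by
    match o with
    | Sum.inl ⟨a, ha⟩ => rfl
    | Sum.inr ⟨P, ⟨c, ⟨⟨⟨⟨S', b⟩, t'⟩, hok', hS'⟩, hPM⟩⟩⟩ =>
        dsimp only at hS'
        subst hS'
        simp

-- chunk 6: cardinality computations
lemma natCard_sigma {ι : Type*} [Fintype ι] (f : ι → Type*) [∀ i, Finite (f i)] :
    Nat.card (Σ i, f i) = ∑ i, Nat.card (f i) := by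
  letI : ∀ i, Fintype (f i) := fun i => Fintype.ofFinite (f i)
  simp [Nat.card_eq_fintype_card, Fintype.card_sigma]

lemma natCard_interval (m : ℕ) : Nat.card {a : ℕ // 1 ≤ a ∧ a ≤ m} = m := by
  have e : {a : ℕ // 1 ≤ a ∧ a ≤ m} ≃ {a : ℕ // a ∈ Finset.Icc 1 m} :=
    Equiv.subtypeEquivRight (by intro a; simp [Finset.mem_Icc])
  rw [Nat.card_congr e, Nat.card_eq_fintype_card, Fintype.card_coe, Nat.card_Icc]
  omega

instance intervalFinite (m : ℕ) : Finite {a : ℕ // 1 ≤ a ∧ a ≤ m} :=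
  Finite.of_injective (fun x => (⟨x.1, by omega⟩ : Fin (m + 1)))
    (by intro a b h; apply Subtype.ext; exact congrArg Fin.val h)

lemma dataP_empty (n : ℕ) : IsEmpty (DataP n ∅) := by
  constructor
  rintro ⟨⟨⟨S, a⟩, t⟩, hok, hS⟩
  have hS2 : S = ∅ := hS
  subst hS2
  match t with
  | [] =>
      obtain ⟨h1, h2⟩ := okRev_singleton.mp hok
      have h1' : 1 ≤ a := h1
      have h2' : a ≤ (∅ : Finset (Fin n)).card := h2
      simp only [Finset.card_empty] at h2'
      omega
  | y :: t' =>
      have h := (okRev_cons_cons.mp hok).1.1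
      exact Finset.not_ssubset_empty _ h

lemma descGe (m : ℕ) : ∀ j, 1 ≤ j → j ≤ m → m ≤ m.descFactorial j := by
  intro j
  induction j with
  | zero => omega
  | succ j ihj =>
      intro _ h2
      match j with
      | 0 => simp [Nat.descFactorial]
      | j' + 1 =>
          have hd : m.descFactorial (j' + 2) = (m - (j' + 1)) * m.descFactorial (j' + 1) :=
            Nat.descFactorial_succ m (j' + 1)
          have h3 : m ≤ m.descFactorial (j' + 1) := ihj (by omega) (by omega)
          calc m ≤ m.descFactorial (j' + 1) := h3
          _ ≤ (m - (j' + 1)) * m.descFactorial (j' + 1) :=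
              Nat.le_mul_of_pos_left _ (by omega)
          _ = m.descFactorial (j' + 2) := hd.symm

lemma keyArith (m : ℕ) (hm : 1 ≤ m) :
    m + ∑ j ∈ Finset.range (m + 1),
      m.choose j * ((m - j - 1) * (if j = 0 then 0 else Nat.factorial j)) = Nat.factorial m := by
  have hterm : ∀ j, m.choose j * ((m - j - 1) * (if j = 0 then 0 else Nat.factorial j)) =
      if j = 0 then 0 else (m - j - 1) * m.descFactorial j := by
    intro j
    by_cases hj : j = 0
    · simp [hj]
    · rw [if_neg hj, if_neg hj, Nat.descFactorial_eq_factorial_mul_choose]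
      ring
  simp only [hterm]
  rw [Finset.range_eq_Ico, Finset.sum_eq_sum_Ico_succ_bot (by omega), if_pos rfl]
  have hcong : ∀ j ∈ Finset.Ico 1 (m + 1),
      (if j = 0 then 0 else (m - j - 1) * m.descFactorial j) =
        (m - j - 1) * m.descFactorial j := by
    intro j hj
    rw [Finset.mem_Ico] at hj
    rw [if_neg (by omega)]
  rw [Finset.sum_congr rfl hcong, Finset.sum_Ico_succ_top (by omega)]
  have htop : (m - m - 1) * m.descFactorial m = 0 := by
    simp [Nat.sub_self]
  rw [htop]
  have tele : ∀ J, J ≤ m - 1 → ∑ j ∈ Finset.Ico 1 (J + 1), (m - j - 1) * m.descFactorial j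
      = m.descFactorial (J + 1) - m := by
    intro J
    induction J with
    | zero => simp [Nat.descFactorial]
    | succ J ihJ =>
        intro hJ
        rw [Finset.sum_Ico_succ_top (by omega), ihJ (by omega)]
        have h1 : m.descFactorial (J + 1 + 1) = (m - (J + 1)) * m.descFactorial (J + 1) :=
          Nat.descFactorial_succ m (J + 1)
        have h2 : m ≤ m.descFactorial (J + 1) := descGe m (J + 1) (by omega) (by omega)
        obtain ⟨c, hc2⟩ : ∃ c, m - (J + 1) = c + 1 := ⟨m - (J + 1) - 1, by omega⟩
        have hc3 : m - (J + 1) - 1 = c := by omega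
        rw [hc3, h1, hc2, Nat.succ_mul]
        omega
  have hm1 : m - 1 + 1 = m := by omega
  have := tele (m - 1) (le_refl _)
  rw [hm1] at this
  rw [this, Nat.descFactorial_self]
  have := Nat.self_le_factorial m
  omega

lemma dataCard (n : ℕ) : ∀ (m : ℕ) (M : Finset (Fin n)), M.card ≤ m →
    Nat.card (DataP n M) = if M = ∅ then 0 else Nat.factorial M.card := by
  intro m
  induction m with
  | zero =>
      intro M hM
      have hME : M = ∅ := Finset.card_eq_zero.mp (by omega)
      rw [if_pos hME]
      subst hME
      haveI := dataP_empty n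
      exact Nat.card_of_isEmpty
  | succ m ih =>
      intro M hM
      by_cases hME : M = ∅
      · rw [if_pos hME]
        subst hME
        haveI := dataP_empty n
        exact Nat.card_of_isEmpty
      rw [if_neg hME]
      rw [Nat.card_congr (peel n M), Nat.card_sum, natCard_interval, natCard_sigma]
      have hterm : ∀ P : Finset (Fin n),
          Nat.card (Fin (M.card - P.card - 1) × {q : DataP n P // P ⊂ M}) =
          if P ⊂ M then (M.card - P.card - 1) * (if P = ∅ then 0 else Nat.factorial P.card) else 0 := by
        intro P
        rw [Nat.card_prod, Nat.card_eq_fintype_card (α := Fin _), Fintype.card_fin]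
        by_cases hP : P ⊂ M
        · rw [if_pos hP, Nat.card_congr (Equiv.subtypeUnivEquiv (fun _ => hP))]
          rw [ih P (by have := Finset.card_lt_card hP; omega)]
        · rw [if_neg hP]
          haveI : IsEmpty {q : DataP n P // P ⊂ M} := ⟨fun q => hP q.2⟩
          rw [Nat.card_of_isEmpty, mul_zero]
      rw [Finset.sum_congr rfl (fun P _ => hterm P), ← Finset.sum_filter]
      have hfil : Finset.univ.filter (· ⊂ M) = M.ssubsets := by
        ext P
        simp [Finset.mem_ssubsets]
      rw [hfil]
      have hext : ∑ P ∈ M.ssubsets, (M.card - P.card - 1) * (if P = ∅ then 0 else Nat.factorial P.card) =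
          ∑ P ∈ M.powerset, (M.card - P.card - 1) * (if P = ∅ then 0 else Nat.factorial P.card) := by
        apply Finset.sum_subset
        · intro P hP
          rw [Finset.mem_ssubsets] at hP
          exact Finset.mem_powerset.mpr hP.subset
        · intro P hP hP2
          rw [Finset.mem_powerset] at hP
          rw [Finset.mem_ssubsets] at hP2
          by_cases hPe : P = M
          · subst hPe
            simp [Nat.sub_self]
          · exact absurd (Finset.ssubset_iff_subset_ne.mpr ⟨hP, hPe⟩) hP2
      rw [hext]
      have hcardform : ∀ P ∈ M.powerset,
          (M.card - P.card - 1) * (if P = ∅ then 0 else Nat.factorial P.card)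
          = (fun j => (M.card - j - 1) * (if j = 0 then 0 else Nat.factorial j)) P.card := by
        intro P _
        by_cases hP : P = ∅
        · simp [hP]
        · dsimp only
          rw [if_neg hP, if_neg (by simpa [Finset.card_eq_zero] using hP)]
      rw [Finset.sum_congr rfl hcardform]
      rw [Finset.sum_powerset_apply_card
        (f := fun j => (M.card - j - 1) * (if j = 0 then 0 else Nat.factorial j)) (x := M)]
      simp only [smul_eq_mul]
      exact keyArith M.card (by
        have : 0 < M.card := Finset.card_pos.mpr (Finset.nonempty_iff_ne_empty.mpr hME)
        omega)


theorem stmt11 (n : ℕ) :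
    Nat.card (AugFYBn n) = 1 + ∑ k ∈ Finset.Icc 1 n, n.choose k * Nat.factorial k := by
  rw [Nat.card_congr (augEquiv n), Nat.card_congr (partEquiv n),
    Nat.card_congr (Equiv.optionEquivSumPUnit _), Nat.card_sum, natCard_sigma]
  have hD : ∀ M : Finset (Fin n),
      Nat.card (DataP n M) = if M = ∅ then 0 else Nat.factorial M.card :=
    fun M => dataCard n M.card M le_rfl
  rw [Finset.sum_congr rfl (fun M _ => hD M)]
  have hPUnit : Nat.card PUnit.{1} = 1 := Nat.card_unique
  rw [hPUnit]
  have hcardform : ∀ M ∈ (Finset.univ : Finset (Fin n)).powerset,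
      (if M = ∅ then 0 else Nat.factorial M.card)
      = (fun j => if j = 0 then 0 else Nat.factorial j) M.card := by
    intro M _
    by_cases hM : M = ∅
    · simp [hM]
    · dsimp only
      rw [if_neg hM, if_neg (by simpa [Finset.card_eq_zero] using hM)]
  rw [← Finset.powerset_univ, Finset.sum_congr rfl hcardform,
    Finset.sum_powerset_apply_card (f := fun j => if j = 0 then 0 else Nat.factorial j)
      (x := Finset.univ),
    Finset.card_univ, Fintype.card_fin]
  simp only [smul_eq_mul]
  rw [Finset.range_eq_Ico, Finset.sum_eq_sum_Ico_succ_bot (by omega)]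
  have hcong : ∀ j ∈ Finset.Ico 1 (n + 1),
      n.choose j * (if j = 0 then 0 else Nat.factorial j) = n.choose j * Nat.factorial j := by
    intro j hj
    rw [Finset.mem_Ico] at hj
    rw [if_neg (by omega)]
  rw [Finset.sum_congr rfl hcong, Finset.Ico_add_one_right_eq_Icc]
  simp
  omega
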